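/- Let A•, B•, C• be cochain complexes of abelian topological groups with continuous differentials, and let φ: A• → B•, ψ: B• → C• be continuous chain maps. Call a chain map φ quasi-open if for every n the map Z^n(A•) ⊕ B^{n-1} → Z^n(B•), (a,b) ↦ φa − d_B b, is open. If φ and ψ are both quasi-open, then the composite ψφ is quasi-open. -/

import Mathlib

/-- A (ℤ-graded) cochain complex of abelian topological groups with continuous
differentials. -/
structure TopComplex where
  X : ℤ → Type
  [grp : ∀ n, AddCommGroup (X n)]
  [top : ∀ n, TopologicalSpace (X n)]
  [tgrp : ∀ n, IsTopologicalAddGroup (X n)]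
  d : ∀ n, X n →+ X (n + 1)
  d_cont : ∀ n, Continuous (d n)
  d_comp_d : ∀ n x, d (n + 1) (d n x) = 0

attribute [instance] TopComplex.grp TopComplex.top TopComplex.tgrp

/-- The group of `n`-cocycles, with the subspace topology. -/
abbrev TopComplex.Z (A : TopComplex) (n : ℤ) : Type := {a : A.X n // A.d n a = 0}

/-- A continuous chain map of complexes of abelian topological groups. -/
structure ChainMap (A B : TopComplex) where
  f : ∀ n, A.X n →+ B.X n
  cont : ∀ n, Continuous (f n)
  comm : ∀ n a, f (n + 1) (A.d n a) = B.d n (f n a)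

/-- Composition of chain maps. -/
def ChainMap.comp {A B C : TopComplex} (ψ : ChainMap B C) (φ : ChainMap A B) :
    ChainMap A C where
  f n := (ψ.f n).comp (φ.f n)
  cont n := (ψ.cont n).comp (φ.cont n)
  comm n a := by
    simp only [AddMonoidHom.comp_apply, φ.comm n a, ψ.comm n]

/-- A chain map `φ : A• → B•` is quasi-open if for every `n` the map
`Z^n(A•) ⊕ B^{n-1} → Z^n(B•)`, `(a, b) ↦ φ a − d_B b`, is open (here stated with
`n` replaced by `n+1`, which ranges over all of `ℤ`). -/
def IsQuasiOpen {A B : TopComplex} (φ : ChainMap A B) : Prop :=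
  ∀ n : ℤ, IsOpenMap (fun p : A.Z (n + 1) × B.X n =>
    (⟨φ.f (n + 1) p.1.1 - B.d n p.2, by
      have h1 : B.d (n + 1) (φ.f (n + 1) p.1.1) = φ.f (n + 1 + 1) (A.d (n + 1) p.1.1) :=
        (φ.comm (n + 1) p.1.1).symm
      simp [map_sub, h1, p.1.2, B.d_comp_d]⟩ : B.Z (n + 1)))

/-- If `φ` and `ψ` are quasi-open continuous chain maps of complexes of abelian
topological groups, then so is the composite `ψ ∘ φ`. -/
theorem isQuasiOpen_comp {A B C : TopComplex} (φ : ChainMap A B) (ψ : ChainMap B C)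
    (hφ : IsQuasiOpen φ) (hψ : IsQuasiOpen ψ) : IsQuasiOpen (ψ.comp φ) := by
  intro n
  -- The composite of the two quasi-open structure maps is open.
  have hbig : IsOpenMap (fun q : (A.Z (n + 1) × B.X n) × C.X n =>
      (⟨ψ.f (n + 1) (φ.f (n + 1) q.1.1.1 - B.d n q.1.2) - C.d n q.2, by
        have e1 : C.d (n + 1) (ψ.f (n + 1) (φ.f (n + 1) q.1.1.1)) = 0 := by
          rw [← ψ.comm, ← φ.comm, q.1.1.2, map_zero, map_zero]
        have e2 : C.d (n + 1) (ψ.f (n + 1) (B.d n q.1.2)) = 0 := by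
          rw [← ψ.comm]
          simp [B.d_comp_d]
        simp [map_sub, e1, e2, C.d_comp_d]⟩ : C.Z (n + 1))) := by
    have := (hψ n).comp ((hφ n).prodMap (IsOpenMap.id (X := C.X n)))
    convert this using 2
    rfl
  intro W hW
  -- The "reparametrization" map
  set K : (A.Z (n + 1) × B.X n) × C.X n → A.Z (n + 1) × C.X n :=
    fun q => (q.1.1, ψ.f n q.1.2 + q.2) with hKdef
  have hKcont : Continuous K := by
    refine Continuous.prodMk (continuous_fst.comp continuous_fst) ?_
    exact ((ψ.cont n).comp (continuous_snd.comp continuous_fst)).add continuous_snd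
  have key : (fun p : A.Z (n + 1) × C.X n =>
      (⟨(ψ.comp φ).f (n + 1) p.1.1 - C.d n p.2, by
        have h1 : C.d (n + 1) ((ψ.comp φ).f (n + 1) p.1.1) =
            (ψ.comp φ).f (n + 1 + 1) (A.d (n + 1) p.1.1) :=
          ((ψ.comp φ).comm (n + 1) p.1.1).symm
        simp [map_sub, h1, p.1.2, C.d_comp_d]⟩ : C.Z (n + 1))) '' W =
      (fun q : (A.Z (n + 1) × B.X n) × C.X n =>
      (⟨ψ.f (n + 1) (φ.f (n + 1) q.1.1.1 - B.d n q.1.2) - C.d n q.2, by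
        have e1 : C.d (n + 1) (ψ.f (n + 1) (φ.f (n + 1) q.1.1.1)) = 0 := by
          rw [← ψ.comm, ← φ.comm, q.1.1.2, map_zero, map_zero]
        have e2 : C.d (n + 1) (ψ.f (n + 1) (B.d n q.1.2)) = 0 := by
          rw [← ψ.comm]
          simp [B.d_comp_d]
        simp [map_sub, e1, e2, C.d_comp_d]⟩ : C.Z (n + 1))) '' (K ⁻¹' W) := by
    ext y
    constructor
    · rintro ⟨⟨a, c⟩, hpW, rfl⟩
      refine ⟨((a, 0), c), ?_, ?_⟩
      · simp only [Set.mem_preimage, hKdef, map_zero, zero_add]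
        exact hpW
      · apply Subtype.ext
        simp [ChainMap.comp, map_sub]
    · rintro ⟨⟨⟨a, b⟩, c⟩, hqW, rfl⟩
      refine ⟨K ((a, b), c), hqW, ?_⟩
      apply Subtype.ext
      have hc : ψ.f (n + 1) (B.d n b) = C.d n (ψ.f n b) := ψ.comm n b
      simp [ChainMap.comp, hKdef, map_sub, map_add, hc]
      abel
  rw [key]
  exact hbig _ (hW.preimage hKcont)
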